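/- In the basic prototype with the bootstrap particle filter, the prototype estimate ψ̃_T is an unbiased estimate of ψ_T, that is, E[ψ̃_T] = ψ_T for every number m of particles. -/

import Mathlib

open MeasureTheory ProbabilityTheory Filter

noncomputable section

namespace PFPaper

variable {S : Type} [MeasurableSpace S]

/-- A user of path space `ℕ → S`: coordinate `t-1` of a path represents the
state `x_t` of the chain, `t = 1, 2, …`.  `DependsOn t F` says that `F`
depends only on the coordinates `0, …, t-1`, i.e. on `(x_1, …, x_t)`. -/
def DependsOn (t : ℕ) (F : (ℕ → S) → ℝ) : Prop :=
  ∀ x y : ℕ → S, (∀ i < t, x i = y i) → F x = F y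

/-- The σ-algebra on path space generated by the first `t` coordinates,
i.e. by `(x_1, …, x_t)`. -/
def pathSA (S : Type) [MeasurableSpace S] (t : ℕ) : MeasurableSpace (ℕ → S) :=
  MeasurableSpace.comap (fun (x : ℕ → S) (i : Fin t) => x (i : ℕ)) inferInstance

/-- `Q` is the law on path space of the proposal chain `X_1, X_2, …` (under
which `X_t | X_{t-1}` has the proposal density `q_t(·|X_{t-1})`), and for
`1 ≤ t ≤ T`, `κ t` maps a path `x` to the law of the path agreeing with `x` on
coordinates `< t - 1` and whose coordinate `t-1` (the state `x_t`) is a fresh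
draw from `q_t(·|x_{t-1})`; `κ t` is a regular conditional distribution for
`Q` given the first `t-1` coordinates. -/
structure IsProposal (Q : Measure (ℕ → S)) (κ : ℕ → Kernel (ℕ → S) (ℕ → S))
    (T : ℕ) : Prop where
  markov : ∀ t, IsMarkovKernel (κ t)
  init_const : ∀ x y, κ 1 x = κ 1 y
  keeps_past : ∀ t, 1 ≤ t → t ≤ T → ∀ x, ∀ᵐ y ∂(κ t x), ∀ j < t - 1, y j = x j
  cond_law : ∀ t, 1 ≤ t → t ≤ T → ∀ g : (ℕ → S) → ℝ, Measurable g →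
    (∃ C, ∀ x, |g x| ≤ C) →
    Q[g|pathSA S (t - 1)] =ᵐ[Q] fun x => ∫ y, g y ∂(κ t x)

/-- `η_t = E_q[∏_{k=1}^t w_k(X_k)]`, with `η_0 = 1`. -/
def eta (Q : Measure (ℕ → S)) (w : ℕ → (ℕ → S) → ℝ) (t : ℕ) : ℝ :=
  ∫ x, ∏ k ∈ Finset.Icc 1 t, w k x ∂Q

/-- `h_t^*(x_t) = η_t / ∏_{k=1}^t w_k(x_k)`, with `h_0^* ≡ 1`. -/
def hstar (Q : Measure (ℕ → S)) (w : ℕ → (ℕ → S) → ℝ) (t : ℕ) (x : ℕ → S) : ℝ :=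
  eta Q w t / ∏ k ∈ Finset.Icc 1 t, w k x

/-- `Γ_t(x_t) = ∏_{k=1}^t [w_k(x_k) + w_k²(x_k)]`, with `Γ_0 ≡ 1`. -/
def Gam (w : ℕ → (ℕ → S) → ℝ) (t : ℕ) (x : ℕ → S) : ℝ :=
  ∏ k ∈ Finset.Icc 1 t, (w k x + (w k x) ^ 2)

/-- Regularity of the weight functions `w_t`, `1 ≤ t ≤ T`: they are positive,
measurable, and `w_t` depends only on `(x_1, …, x_t)`. -/
structure WeightFns (w : ℕ → (ℕ → S) → ℝ) (T : ℕ) : Prop where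
  meas : ∀ t, Measurable (w t)
  pos : ∀ t x, 0 < w t x
  dep : ∀ t, 1 ≤ t → t ≤ T → DependsOn t (w t)

/-- All normalizing constants `η_t`, `t ≤ T`, are finite and positive. -/
def EtaFinite (Q : Measure (ℕ → S)) (w : ℕ → (ℕ → S) → ℝ) (T : ℕ) : Prop :=
  ∀ t ≤ T, Integrable (fun x => ∏ k ∈ Finset.Icc 1 t, w k x) Q ∧ 0 < eta Q w t

/-- `f t` is, for `1 ≤ t ≤ T`, a version of `E_q[F(X_T) | X_1, …, X_t]`
(the paper's `f_t(x_t) = E_q[F(X_T)|X_t = x_t]`), with `f T = F` pointwise. -/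
def IsCondExpFamily (Q : Measure (ℕ → S)) (T : ℕ) (F : (ℕ → S) → ℝ)
    (f : ℕ → (ℕ → S) → ℝ) : Prop :=
  (∀ t, 1 ≤ t → t ≤ T →
    Measurable (f t) ∧ DependsOn t (f t) ∧ Q[F|pathSA S t] =ᵐ[Q] f t) ∧
  ∀ x, f T x = F x

/-- `ψ_T = E[ψ(X_T)|Y_T] = η_T⁻¹ E_q[ψ(X_T) ∏_{k=1}^T w_k(X_k)]`
(the importance-sampling representation of the posterior mean in the HMM,
where the observations `Y_1, …, Y_T` are fixed and absorbed into `w`). -/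
def psiT (Q : Measure (ℕ → S)) (w : ℕ → (ℕ → S) → ℝ) (ψ : (ℕ → S) → ℝ)
    (T : ℕ) : ℝ :=
  (eta Q w T)⁻¹ * ∫ x, ψ x * ∏ k ∈ Finset.Icc 1 T, w k x ∂Q

/-- The likelihood ratio `L_T = p̃_T(·|Y_T)/∏_{t=1}^T q_t = η_T⁻¹ ∏_{t=1}^T w_t`
of the HMM. -/
def Lfun (Q : Measure (ℕ → S)) (w : ℕ → (ℕ → S) → ℝ) (T : ℕ) (x : ℕ → S) : ℝ :=
  (eta Q w T)⁻¹ * ∏ k ∈ Finset.Icc 1 T, w k x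

/-- `σ² = Σ_{k=1}^{2T-1} σ_k²` of Theorem 1, where
`σ²_{2t-1} = E_q{[f_t²(X_t) − f_{t-1}²(X_{t-1})] h*_{t-1}(X_{t-1})}` and
`σ²_{2t} = E_q[f_t²(X_t) h_t*(X_t)]`. -/
def sigmaSq (Q : Measure (ℕ → S)) (w : ℕ → (ℕ → S) → ℝ) (T : ℕ)
    (f : ℕ → (ℕ → S) → ℝ) : ℝ :=
  (∑ t ∈ Finset.Icc 1 T,
    ∫ x, ((f t x) ^ 2 - (f (t - 1) x) ^ 2) * hstar Q w (t - 1) x ∂Q) +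
  ∑ t ∈ Finset.Icc 1 (T - 1), ∫ x, (f t x) ^ 2 * hstar Q w t x ∂Q

/-- finiteness (`σ² < ∞`) of all the expectations entering `σ²`. -/
def SigmaSqFin (Q : Measure (ℕ → S)) (w : ℕ → (ℕ → S) → ℝ) (T : ℕ)
    (f : ℕ → (ℕ → S) → ℝ) : Prop :=
  (∀ t, 1 ≤ t → t ≤ T →
    Integrable (fun x => ((f t x) ^ 2 - (f (t - 1) x) ^ 2) * hstar Q w (t - 1) x) Q) ∧
  ∀ t, 1 ≤ t → t ≤ T - 1 → Integrable (fun x => (f t x) ^ 2 * hstar Q w t x) Q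

/-- The family `f_t`, `0 ≤ t ≤ T`, of Theorem 1: `f_0 = 0` and
`f_t(x_t) = E_q{[ψ(X_T) − ψ_T] L_T(X_T) | X_t = x_t}`. -/
def IsHMMfFamily (Q : Measure (ℕ → S)) (w : ℕ → (ℕ → S) → ℝ) (T : ℕ)
    (ψ : (ℕ → S) → ℝ) (f : ℕ → (ℕ → S) → ℝ) : Prop :=
  (∀ x, f 0 x = 0) ∧
  IsCondExpFamily Q T (fun x => (ψ x - psiT Q w ψ T) * Lfun Q w T x) f


/-- The random variables generated by the bootstrap particle filter with `m`
particles and time horizon `T`:  `Xtil t i = X̃_t^i` is the trajectory of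
particle `i` at stage `t` after the importance-sampling (mutation) step
(meaningful coordinates `0, …, t-1`, representing stages `1, …, t`),
`Xres t i = X_t^i` is the trajectory of particle `i` after the stage-`t`
resampling step, `A t i = A_t^i` is the ancestral origin, and `B t j = B_t^j`
is the index resampled for the `j`-th particle at stage `t`. -/
structure Particles (S : Type) [MeasurableSpace S] (T m : ℕ) where
  Ω : Type
  mΩ : MeasurableSpace Ω
  P : @Measure Ω mΩ
  hP : @IsProbabilityMeasure Ω mΩ P
  Xtil : ℕ → ℕ → Ω → ℕ → S
  Xres : ℕ → ℕ → Ω → ℕ → S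
  A : ℕ → ℕ → Ω → ℕ
  B : ℕ → ℕ → Ω → ℕ
  hXtil_meas : ∀ t i, @Measurable Ω (ℕ → S) mΩ inferInstance (Xtil t i)
  hXres_meas : ∀ t i, @Measurable Ω (ℕ → S) mΩ inferInstance (Xres t i)
  hA_meas : ∀ t i, @Measurable Ω ℕ mΩ inferInstance (A t i)
  hB_meas : ∀ t i, @Measurable Ω ℕ mΩ inferInstance (B t i)

attribute [instance] Particles.mΩ Particles.hP

namespace Particles

variable {S : Type} [MeasurableSpace S] {T m : ℕ} (PF : Particles S T m)
variable (w : ℕ → (ℕ → S) → ℝ)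

/-- Pointwise dynamics of the bootstrap filter: `A_0^i = i`; the mutated
particle `X̃_t^i` extends `X_{t-1}^i`; and the stage-`t` resampling
(`1 ≤ t ≤ T-1`) sets `(X_t^j, A_t^j) = (X̃_t^{B_t^j}, A_{t-1}^{B_t^j})`. -/
def Dynamics : Prop :=
  (∀ i ω, PF.A 0 i ω = i) ∧
  (∀ t i ω, ∀ j < t - 1, PF.Xtil t i ω j = PF.Xres (t - 1) i ω j) ∧
  (∀ t j ω, PF.B t j ω < m) ∧
  (∀ t, 1 ≤ t → t ≤ T - 1 → ∀ j ω,
    PF.Xres t j ω = PF.Xtil t (PF.B t j ω) ω ∧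
    PF.A t j ω = PF.A (t - 1) (PF.B t j ω) ω)

/-- The normalized resampling weights `W_t^i = w_t(X̃_t^i)/Σ_j w_t(X̃_t^j)`. -/
def Wn (t i : ℕ) (ω : PF.Ω) : ℝ :=
  w t (PF.Xtil t i ω) / ∑ j ∈ Finset.range m, w t (PF.Xtil t j ω)

/-- `w̄_t = m⁻¹ Σ_j w_t(X̃_t^j)`. -/
def wbar (t : ℕ) (ω : PF.Ω) : ℝ :=
  (∑ j ∈ Finset.range m, w t (PF.Xtil t j ω)) / m

/-- `H̃_t^i = w̄_1 ⋯ w̄_t h_t(X̃_t^i)`, `h_t(x_t) = 1/∏_{k=1}^t w_k(x_k)`. -/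
def Htil (t i : ℕ) (ω : PF.Ω) : ℝ :=
  (∏ k ∈ Finset.Icc 1 t, PF.wbar w k ω) /
    ∏ k ∈ Finset.Icc 1 t, w k (PF.Xtil t i ω)

/-- `H_t^i = w̄_1 ⋯ w̄_t h_t(X_t^i)`; `H_0^i = 1`. -/
def Hres (t i : ℕ) (ω : PF.Ω) : ℝ :=
  (∏ k ∈ Finset.Icc 1 t, PF.wbar w k ω) /
    ∏ k ∈ Finset.Icc 1 t, w k (PF.Xres t i ω)

/-- `#_t^i`, the number of copies of `X̃_t^i` drawn at the `t`-th resampling. -/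
def cnt (t i : ℕ) (ω : PF.Ω) : ℕ :=
  ((Finset.range m).filter fun j => PF.B t j ω = i).card

/-- The σ-algebra `F_{2t-1}`, generated by `{X̃_1^i}` and
`{(X_s^i, X̃_{s+1}^i, A_s^i) : 1 ≤ s < t}`. -/
def Godd (t : ℕ) : MeasurableSpace PF.Ω :=
  (⨆ i ∈ Finset.range m, MeasurableSpace.comap (PF.Xtil 1 i) inferInstance) ⊔
    ⨆ s ∈ Finset.Ico 1 t, ⨆ i ∈ Finset.range m,
      MeasurableSpace.comap
        (fun ω => (PF.Xres s i ω, PF.Xtil (s + 1) i ω, PF.A s i ω)) inferInstance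

/-- The σ-algebra `F_{2t}` (`F_0` is trivial). -/
def Geven (t : ℕ) : MeasurableSpace PF.Ω :=
  if t = 0 then ⊥ else
    PF.Godd t ⊔ ⨆ i ∈ Finset.range m,
      MeasurableSpace.comap (fun ω => (PF.Xres t i ω, PF.A t i ω)) inferInstance

/-- Conditionally on `F_{2(t-1)}`, the mutated particles `X̃_t^1, …, X̃_t^m`
are independent, with `X̃_t^i ∼ κ t (X_{t-1}^i)` (i.e. `X̃_t^i` is `X_{t-1}^i`
extended by a fresh draw from the proposal density `q_t(·|X_{t-1}^i)`). -/
def PropagationLaw (κ : ℕ → Kernel (ℕ → S) (ℕ → S)) : Prop :=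
  ∀ t, 1 ≤ t → t ≤ T → ∀ g : ℕ → (ℕ → S) → ℝ, (∀ i, Measurable (g i)) →
    (∀ i, ∃ C, ∀ x, |g i x| ≤ C) →
    PF.P[fun ω => ∏ i ∈ Finset.range m, g i (PF.Xtil t i ω)|PF.Geven (t - 1)]
      =ᵐ[PF.P]
    fun ω => ∏ i ∈ Finset.range m, ∫ y, g i y ∂(κ t (PF.Xres (t - 1) i ω))

/-- Conditionally on `F_{2t-1}`, the indices `B_t^1, …, B_t^m` are i.i.d. with
`P(B_t^j = i) = W_t^i` (bootstrap/multinomial resampling). -/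
def ResamplingLaw : Prop :=
  ∀ t, 1 ≤ t → t ≤ T - 1 → ∀ g : ℕ → ℕ → ℝ,
    PF.P[fun ω => ∏ j ∈ Finset.range m, g j (PF.B t j ω)|PF.Godd t]
      =ᵐ[PF.P]
    fun ω => ∏ j ∈ Finset.range m, ∑ i ∈ Finset.range m, PF.Wn w t i ω * g j i

/-- All structural assumptions on the bootstrap particle filter with
bootstrap resampling at every stage. -/
def IsBootstrapFilter (κ : ℕ → Kernel (ℕ → S) (ℕ → S)) : Prop :=
  PF.Dynamics ∧ PF.PropagationLaw κ ∧ PF.ResamplingLaw w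

/-- The particle filter estimate
`ψ̂_T = (m w̄_T)⁻¹ Σ_i ψ(X̃_T^i) w_T(X̃_T^i)`. -/
def psiHat (ψ : (ℕ → S) → ℝ) (ω : PF.Ω) : ℝ :=
  ((m : ℝ) * PF.wbar w T ω)⁻¹ *
    ∑ i ∈ Finset.range m, ψ (PF.Xtil T i ω) * w T (PF.Xtil T i ω)

/-- The prototype estimate
`ψ̃_T = m⁻¹ Σ_i L_T(X̃_T^i) ψ(X̃_T^i) H_{T-1}^i`. -/
def psiTilde (L ψ : (ℕ → S) → ℝ) (ω : PF.Ω) : ℝ :=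
  (m : ℝ)⁻¹ * ∑ i ∈ Finset.range m,
    L (PF.Xtil T i ω) * ψ (PF.Xtil T i ω) * PF.Hres w (T - 1) i ω

end Particles

/-- Convergence in probability to a constant `c`, for a family of random
variables defined on the `m`-particle systems, as `m → ∞`. -/
def ConvInProb {S : Type} [MeasurableSpace S] {T : ℕ}
    (PF : ∀ m : ℕ, Particles S T m) (Z : ∀ m, (PF m).Ω → ℝ) (c : ℝ) : Prop :=
  ∀ ε > (0 : ℝ),
    Tendsto (fun m => (PF m).P {ω | ε ≤ |Z m ω - c|}) atTop (nhds 0)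

/-- Convergence in distribution to the normal law `N(0, v)` as `m → ∞`. -/
def ConvToGaussian {S : Type} [MeasurableSpace S] {T : ℕ}
    (PF : ∀ m : ℕ, Particles S T m) (Z : ∀ m, (PF m).Ω → ℝ) (v : ℝ) : Prop :=
  ∀ φ : BoundedContinuousFunction ℝ ℝ,
    Tendsto (fun m => ∫ ω, φ (Z m ω) ∂(PF m).P) atTop
      (nhds (∫ x, φ x ∂(gaussianReal 0 (Real.toNNReal v))))

section Helpers

variable {α : Type*} [MeasurableSpace α] {μ : Measure α}

lemma bdd_integrable [IsFiniteMeasure μ] {f : α → ℝ} (hf : AEStronglyMeasurable f μ)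
    {C : ℝ} (h : ∀ x, |f x| ≤ C) : Integrable f μ :=
  (integrable_const C).mono' hf (Filter.Eventually.of_forall fun x => by
    simpa [Real.norm_eq_abs] using h x)

lemma min_nat_tendsto (c : ℝ) : Tendsto (fun n : ℕ => min c (n : ℝ)) atTop (nhds c) :=
  tendsto_atTop_of_eventually_const (i₀ := ⌈c⌉₊) fun n hn =>
    min_eq_left ((Nat.le_ceil c).trans (Nat.cast_le.mpr hn))

lemma min_nat_mono (c : ℝ) : Monotone fun n : ℕ => min c (n : ℝ) :=
  fun a b hab => min_le_min le_rfl (Nat.cast_le.mpr hab)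

lemma lim_trick {fn : ℕ → α → ℝ} {f : α → ℝ} (hint : ∀ n, Integrable (fn n) μ)
    (h0 : ∀ n x, 0 ≤ fn n x) (hmono : ∀ x, Monotone fun n => fn n x)
    (hto : ∀ x, Tendsto (fun n => fn n x) atTop (nhds (f x)))
    (hfm : AEStronglyMeasurable f μ) {c : ℝ}
    (hc : Tendsto (fun n => ∫ x, fn n x ∂μ) atTop (nhds c)) :
    Integrable f μ ∧ ∫ x, f x ∂μ = c := by
  have hf0 : ∀ x, 0 ≤ f x := fun x => ge_of_tendsto' (hto x) fun n => h0 n x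
  have h1 : ∀ n, ENNReal.ofReal (∫ x, fn n x ∂μ) = ∫⁻ x, ENNReal.ofReal (fn n x) ∂μ :=
    fun n => ofReal_integral_eq_lintegral_ofReal (hint n) (ae_of_all _ (h0 n))
  have h2 : Tendsto (fun n => ∫⁻ x, ENNReal.ofReal (fn n x) ∂μ) atTop
      (nhds (∫⁻ x, ENNReal.ofReal (f x) ∂μ)) :=
    lintegral_tendsto_of_tendsto_of_monotone
      (fun n => ENNReal.measurable_ofReal.comp_aemeasurable (hint n).aemeasurable)
      (ae_of_all _ fun x a b hab => ENNReal.ofReal_le_ofReal (hmono x hab))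
      (ae_of_all _ fun x => (ENNReal.continuous_ofReal.tendsto _).comp (hto x))
  have h3 : Tendsto (fun n => ∫⁻ x, ENNReal.ofReal (fn n x) ∂μ) atTop
      (nhds (ENNReal.ofReal c)) := by
    simp_rw [← h1]
    exact (ENNReal.continuous_ofReal.tendsto _).comp hc
  have hkey : ∫⁻ x, ENNReal.ofReal (f x) ∂μ = ENNReal.ofReal c :=
    tendsto_nhds_unique h2 h3
  have hfi : Integrable f μ := by
    refine ⟨hfm, ?_⟩
    rw [hasFiniteIntegral_iff_ofReal (ae_of_all _ hf0), hkey]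
    exact ENNReal.ofReal_lt_top
  have hc0 : 0 ≤ c := ge_of_tendsto' hc fun n => integral_nonneg (h0 n)
  refine ⟨hfi, ?_⟩
  rw [integral_eq_lintegral_of_nonneg_ae (ae_of_all _ hf0) hfm, hkey, ENNReal.toReal_ofReal hc0]

lemma integrable_term_of_sum {s : Finset ℕ} {g : ℕ → α → ℝ}
    (h0 : ∀ b x, 0 ≤ g b x) (hmeas : ∀ b, AEStronglyMeasurable (g b) μ)
    (hint : Integrable (fun x => ∑ b ∈ s, g b x) μ) {b : ℕ} (hb : b ∈ s) :
    Integrable (g b) μ :=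
  hint.mono' (hmeas b) (ae_of_all _ fun x => by
    rw [Real.norm_eq_abs, abs_of_nonneg (h0 b x)]
    exact Finset.single_le_sum (fun c _ => h0 c x) hb)

lemma meas_comap_self {Ω β : Type*} [mβ : MeasurableSpace β] (f : Ω → β) :
    Measurable[MeasurableSpace.comap f mβ] f := fun s hs => ⟨s, hs, rfl⟩

lemma meas_of_comap_le {Ω β : Type*} {m1 : MeasurableSpace Ω} [mβ : MeasurableSpace β]
    {f : Ω → β} (h : MeasurableSpace.comap f mβ ≤ m1) : Measurable[m1] f :=
  fun s hs => h _ ⟨s, hs, rfl⟩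

end Helpers

section Unbiased

variable {S : Type} [MeasurableSpace S] {T m : ℕ} (PF : Particles S T m)
  (w : ℕ → (ℕ → S) → ℝ)

lemma godd_le (t : ℕ) : PF.Godd t ≤ PF.mΩ := by
  refine sup_le (iSup_le fun i => iSup_le fun _ => (PF.hXtil_meas 1 i).comap_le) ?_
  exact iSup_le fun s => iSup_le fun _ => iSup_le fun i => iSup_le fun _ =>
    ((PF.hXres_meas s i).prodMk ((PF.hXtil_meas (s+1) i).prodMk (PF.hA_meas s i))).comap_le

lemma geven_le (t : ℕ) : PF.Geven t ≤ PF.mΩ := by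
  unfold Particles.Geven
  split
  · exact bot_le
  · exact sup_le (godd_le PF t) (iSup_le fun i => iSup_le fun _ =>
      ((PF.hXres_meas t i).prodMk (PF.hA_meas t i)).comap_le)

lemma godd_le_geven {t : ℕ} (ht : t ≠ 0) : PF.Godd t ≤ PF.Geven t := by
  unfold Particles.Geven; rw [if_neg ht]; exact le_sup_left

lemma comap_xtil1_le (t : ℕ) {j : ℕ} (hj : j < m) :
    MeasurableSpace.comap (PF.Xtil 1 j) inferInstance ≤ PF.Godd t := by
  unfold Particles.Godd
  refine le_trans ?_ le_sup_left
  exact le_iSup₂ (f := fun (i : ℕ) (_ : i ∈ Finset.range m) =>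
    MeasurableSpace.comap (PF.Xtil 1 i) inferInstance) j (Finset.mem_range.mpr hj)

lemma comap_triple_le (t : ℕ) {s j : ℕ} (hs : s ∈ Finset.Ico 1 t) (hj : j < m) :
    MeasurableSpace.comap
      (fun ω => (PF.Xres s j ω, PF.Xtil (s+1) j ω, PF.A s j ω)) inferInstance ≤ PF.Godd t := by
  unfold Particles.Godd
  refine le_trans (b := ⨆ i ∈ Finset.range m, MeasurableSpace.comap
      (fun ω => (PF.Xres s i ω, PF.Xtil (s+1) i ω, PF.A s i ω)) inferInstance)
    ?_ (le_trans ?_ le_sup_right)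
  · exact le_iSup₂ (f := fun (i : ℕ) (_ : i ∈ Finset.range m) =>
      MeasurableSpace.comap (fun ω => (PF.Xres s i ω, PF.Xtil (s+1) i ω, PF.A s i ω))
        inferInstance) j (Finset.mem_range.mpr hj)
  · exact le_iSup₂ (f := fun (s' : ℕ) (_ : s' ∈ Finset.Ico 1 t) =>
      ⨆ i ∈ Finset.range m, MeasurableSpace.comap
        (fun ω => (PF.Xres s' i ω, PF.Xtil (s'+1) i ω, PF.A s' i ω)) inferInstance) s hs

lemma comap_pair_le {t : ℕ} (ht : t ≠ 0) {i : ℕ} (hi : i < m) :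
    MeasurableSpace.comap (fun ω => (PF.Xres t i ω, PF.A t i ω)) inferInstance
      ≤ PF.Geven t := by
  unfold Particles.Geven; rw [if_neg ht]
  refine le_trans ?_ le_sup_right
  exact le_iSup₂ (f := fun (j : ℕ) (_ : j ∈ Finset.range m) =>
    MeasurableSpace.comap (fun ω => (PF.Xres t j ω, PF.A t j ω)) inferInstance) i
    (Finset.mem_range.mpr hi)

lemma xtil_godd {t k j : ℕ} (hk1 : 1 ≤ k) (hkt : k ≤ t) (hj : j < m) :
    Measurable[PF.Godd t] (PF.Xtil k j) := by
  rcases eq_or_lt_of_le hk1 with h1 | h2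
  · cases h1
    exact meas_of_comap_le (comap_xtil1_le PF t hj)
  · have hs : k - 1 ∈ Finset.Ico 1 t := Finset.mem_Ico.mpr ⟨by omega, by omega⟩
    have h3 := meas_of_comap_le (comap_triple_le PF t hs hj)
    have hk : k - 1 + 1 = k := by omega
    rw [hk] at h3
    exact (measurable_fst.comp measurable_snd).comp h3

lemma xres_geven {t i : ℕ} (ht : t ≠ 0) (hi : i < m) :
    Measurable[PF.Geven t] (PF.Xres t i) :=
  measurable_fst.comp (meas_of_comap_le (comap_pair_le PF ht hi))

variable {w}

lemma wbar_godd (hwf : WeightFns w T) {t k : ℕ} (hk1 : 1 ≤ k) (hkt : k ≤ t) :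
    Measurable[PF.Godd t] (PF.wbar w k) := by
  unfold Particles.wbar
  exact (Finset.measurable_sum _ fun j hj =>
    (hwf.meas k).comp (xtil_godd PF hk1 hkt (Finset.mem_range.mp hj))).div_const _

lemma htil_godd (hwf : WeightFns w T) {t i : ℕ} (ht : 1 ≤ t) (hi : i < m) :
    Measurable[PF.Godd t] (PF.Htil w t i) := by
  unfold Particles.Htil
  exact (Finset.measurable_prod _ fun k hk =>
      wbar_godd PF hwf (Finset.mem_Icc.mp hk).1 (Finset.mem_Icc.mp hk).2).div
    (Finset.measurable_prod _ fun k hk => (hwf.meas k).comp (xtil_godd PF ht le_rfl hi))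

lemma wn_godd (hwf : WeightFns w T) {t i : ℕ} (ht : 1 ≤ t) (hi : i < m) :
    Measurable[PF.Godd t] (PF.Wn w t i) := by
  unfold Particles.Wn
  exact ((hwf.meas t).comp (xtil_godd PF ht le_rfl hi)).div
    (Finset.measurable_sum _ fun j hj =>
      (hwf.meas t).comp (xtil_godd PF ht le_rfl (Finset.mem_range.mp hj)))

lemma hres_geven (hwf : WeightFns w T) {t i : ℕ} (ht : t ≠ 0) (hi : i < m) :
    Measurable[PF.Geven t] (PF.Hres w t i) := by
  unfold Particles.Hres
  refine Measurable.div ?_ ?_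
  · exact Finset.measurable_prod _ fun k hk =>
      (wbar_godd PF hwf (Finset.mem_Icc.mp hk).1 (Finset.mem_Icc.mp hk).2).mono
        (godd_le_geven PF ht) le_rfl
  · exact Finset.measurable_prod _ fun k hk => (hwf.meas k).comp (xres_geven PF ht hi)

lemma wbar_meas (hwf : WeightFns w T) (t : ℕ) : Measurable (PF.wbar w t) :=
  (Finset.measurable_sum _ fun j _ => (hwf.meas t).comp (PF.hXtil_meas t j)).div_const _

lemma hres_meas (hwf : WeightFns w T) (t i : ℕ) : Measurable (PF.Hres w t i) :=
  (Finset.measurable_prod _ fun k _ => wbar_meas PF hwf k).div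
    (Finset.measurable_prod _ fun k _ => (hwf.meas k).comp (PF.hXres_meas t i))

lemma htil_meas (hwf : WeightFns w T) (t i : ℕ) : Measurable (PF.Htil w t i) :=
  (Finset.measurable_prod _ fun k _ => wbar_meas PF hwf k).div
    (Finset.measurable_prod _ fun k _ => (hwf.meas k).comp (PF.hXtil_meas t i))

lemma wn_meas (hwf : WeightFns w T) (t i : ℕ) : Measurable (PF.Wn w t i) :=
  ((hwf.meas t).comp (PF.hXtil_meas t i)).div
    (Finset.measurable_sum _ fun j _ => (hwf.meas t).comp (PF.hXtil_meas t j))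

lemma prodw_pos (hwf : WeightFns w T) (t : ℕ) (x : ℕ → S) :
    0 < ∏ k ∈ Finset.Icc 1 t, w k x := Finset.prod_pos fun k _ => hwf.pos k x

lemma sumw_pos (hwf : WeightFns w T) (hm : 1 ≤ m) (t : ℕ) (ω : PF.Ω) :
    0 < ∑ j ∈ Finset.range m, w t (PF.Xtil t j ω) :=
  Finset.sum_pos (fun j _ => hwf.pos t _) ⟨0, Finset.mem_range.mpr hm⟩

lemma wbar_pos (hwf : WeightFns w T) (hm : 1 ≤ m) (t : ℕ) (ω : PF.Ω) :
    0 < PF.wbar w t ω :=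
  div_pos (sumw_pos PF hwf hm t ω) (by exact_mod_cast Nat.pos_of_ne_zero (by omega))

lemma prodwbar_pos (hwf : WeightFns w T) (hm : 1 ≤ m) (t : ℕ) (ω : PF.Ω) :
    0 < ∏ k ∈ Finset.Icc 1 t, PF.wbar w k ω :=
  Finset.prod_pos fun k _ => wbar_pos PF hwf hm k ω

lemma hres_pos (hwf : WeightFns w T) (hm : 1 ≤ m) (t i : ℕ) (ω : PF.Ω) :
    0 < PF.Hres w t i ω :=
  div_pos (prodwbar_pos PF hwf hm t ω) (prodw_pos hwf t _)

lemma htil_pos (hwf : WeightFns w T) (hm : 1 ≤ m) (t i : ℕ) (ω : PF.Ω) :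
    0 < PF.Htil w t i ω :=
  div_pos (prodwbar_pos PF hwf hm t ω) (prodw_pos hwf t _)

lemma wn_nonneg (hwf : WeightFns w T) (hm : 1 ≤ m) (t i : ℕ) (ω : PF.Ω) :
    0 ≤ PF.Wn w t i ω :=
  div_nonneg (hwf.pos t _).le (sumw_pos PF hwf hm t ω).le

lemma wn_sum_one (hwf : WeightFns w T) (hm : 1 ≤ m) (t : ℕ) (ω : PF.Ω) :
    ∑ b ∈ Finset.range m, PF.Wn w t b ω = 1 := by
  unfold Particles.Wn
  rw [← Finset.sum_div]
  exact div_self (sumw_pos PF hwf hm t ω).ne'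

lemma key_alg (hdyn : PF.Dynamics) (hwf : WeightFns w T) (hm : 1 ≤ m)
    {s : ℕ} (hs1 : 1 ≤ s) (hsT : s ≤ T) (b : ℕ) (ω : PF.Ω) :
    PF.Wn w s b ω * PF.Htil w s b ω = (m:ℝ)⁻¹ * PF.Hres w (s-1) b ω := by
  obtain ⟨s', rfl⟩ : ∃ s', s = s' + 1 := ⟨s - 1, by omega⟩
  simp only [Nat.add_sub_cancel]
  have hP : ∏ k ∈ Finset.Icc 1 s', w k (PF.Xtil (s'+1) b ω)
      = ∏ k ∈ Finset.Icc 1 s', w k (PF.Xres s' b ω) := by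
    refine Finset.prod_congr rfl fun k hk => ?_
    obtain ⟨hk1, hk2⟩ := Finset.mem_Icc.mp hk
    refine hwf.dep k hk1 (by omega) _ _ fun i hi => ?_
    have := hdyn.2.1 (s'+1) b ω i (by simpa using lt_of_lt_of_le hi hk2)
    simpa using this
  unfold Particles.Wn Particles.Htil Particles.Hres Particles.wbar
  rw [Finset.prod_Icc_succ_top (by omega : 1 ≤ s' + 1),
    Finset.prod_Icc_succ_top (by omega : 1 ≤ s' + 1), hP]
  have hD : (0:ℝ) < ∑ j ∈ Finset.range m, w (s'+1) (PF.Xtil (s'+1) j ω) :=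
    sumw_pos PF hwf hm (s'+1) ω
  have hwb : (0:ℝ) < w (s'+1) (PF.Xtil (s'+1) b ω) := hwf.pos _ _
  have hPr : (0:ℝ) < ∏ k ∈ Finset.Icc 1 s', w k (PF.Xres s' b ω) := prodw_pos hwf s' _
  have hm0 : (m:ℝ) ≠ 0 := by exact_mod_cast Nat.pos_of_ne_zero (by omega) |>.ne'
  field_simp

end Unbiased

section CondExp

variable {S : Type} [MeasurableSpace S] {T m : ℕ}

/-- `Kfun κ t G = ∫ G dκ t ·`, the one-step conditional expectation operator. -/
def Kfun (κ : ℕ → Kernel (ℕ → S) (ℕ → S)) (t : ℕ) (G : (ℕ → S) → ℝ) : (ℕ → S) → ℝ :=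
  fun x => ∫ y, G y ∂(κ t x)

variable {κ : ℕ → Kernel (ℕ → S) (ℕ → S)}

lemma kfun_meas {t : ℕ} (hmk : IsMarkovKernel (κ t)) {G : (ℕ → S) → ℝ}
    (hG : Measurable G) : Measurable (Kfun κ t G) := by
  haveI := hmk
  exact (MeasureTheory.StronglyMeasurable.integral_kernel_prod_right'
    (κ := κ t) ((hG.comp measurable_snd).stronglyMeasurable)).measurable

lemma kfun_nonneg (t : ℕ) {G : (ℕ → S) → ℝ} (h0 : ∀ x, 0 ≤ G x) (x : ℕ → S) :
    0 ≤ Kfun κ t G x := integral_nonneg h0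

lemma kfun_le {t : ℕ} (hmk : IsMarkovKernel (κ t)) {G : (ℕ → S) → ℝ} {C : ℝ}
    (hG : Measurable G) (h0 : ∀ x, 0 ≤ G x) (hbd : ∀ x, G x ≤ C) (x : ℕ → S) :
    Kfun κ t G x ≤ C := by
  haveI := hmk
  have habs : ∀ y, |G y| ≤ C := fun y => by rw [abs_of_nonneg (h0 y)]; exact hbd y
  have hint : Integrable G (κ t x) := bdd_integrable hG.aestronglyMeasurable habs
  calc Kfun κ t G x ≤ ∫ _, C ∂(κ t x) := integral_mono hint (integrable_const C) hbd
    _ = C := by simp [measure_univ]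

lemma kfun_integral {Q : Measure (ℕ → S)} (hQ : IsProbabilityMeasure Q)
    (hκ : IsProposal Q κ T) {t : ℕ} (ht1 : 1 ≤ t) (htT : t ≤ T)
    {G : (ℕ → S) → ℝ} {C : ℝ} (hG : Measurable G) (hbd : ∀ x, |G x| ≤ C) :
    ∫ x, Kfun κ t G x ∂Q = ∫ x, G x ∂Q := by
  haveI := hQ
  have hle : pathSA S (t-1) ≤ (inferInstance : MeasurableSpace (ℕ → S)) :=
    (measurable_pi_lambda _ fun _ => measurable_pi_apply _).comap_le
  have h := hκ.cond_law t ht1 htT G hG ⟨C, hbd⟩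
  have h2 : ∫ x, Kfun κ t G x ∂Q = ∫ x, (Q[G|pathSA S (t-1)]) x ∂Q :=
    integral_congr_ae h.symm
  rw [h2, integral_condExp hle]

variable (PF : Particles S T m)

lemma condexp_prop (hprop : PF.PropagationLaw κ) (hmk : ∀ t, IsMarkovKernel (κ t))
    {t i : ℕ} (ht1 : 1 ≤ t) (htT : t ≤ T) (hi : i < m) {G : (ℕ → S) → ℝ} {C : ℝ}
    (hG : Measurable G) (hbd : ∀ x, |G x| ≤ C) :
    PF.P[fun ω => G (PF.Xtil t i ω)|PF.Geven (t-1)] =ᵐ[PF.P]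
      fun ω => Kfun κ t G (PF.Xres (t-1) i ω) := by
  classical
  have h := hprop t ht1 htT (fun j => if j = i then G else fun _ => 1)
    (fun j => by by_cases hj : j = i <;> simp [hj, hG])
    (fun j => by
      by_cases hj : j = i
      · exact ⟨C, by simp [hj, hbd]⟩
      · exact ⟨1, by simp [hj]⟩)
  have hL : (fun ω => ∏ j ∈ Finset.range m,
      (if j = i then G else fun _ => (1:ℝ)) (PF.Xtil t j ω))
      = fun ω => G (PF.Xtil t i ω) := by
    funext ω
    rw [Finset.prod_eq_single_of_mem i (Finset.mem_range.mpr hi)]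
    · simp
    · intro b _ hb; simp [hb]
  have hR : (fun ω => ∏ j ∈ Finset.range m, ∫ y,
      (if j = i then G else fun _ => (1:ℝ)) y ∂(κ t (PF.Xres (t-1) j ω)))
      = fun ω => Kfun κ t G (PF.Xres (t-1) i ω) := by
    funext ω
    rw [Finset.prod_eq_single_of_mem i (Finset.mem_range.mpr hi)]
    · simp [Kfun]
    · intro b _ hb
      haveI := hmk t
      simp [hb, measure_univ]
  rw [hL, hR] at h
  exact h

variable {w : ℕ → (ℕ → S) → ℝ}

lemma prop_step (hwf : WeightFns w T) (hm : 1 ≤ m) (hprop : PF.PropagationLaw κ)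
    (hmk : ∀ t, IsMarkovKernel (κ t))
    {t i : ℕ} (ht1 : 1 ≤ t) (htT : t ≤ T) (hi : i < m)
    {G : (ℕ → S) → ℝ} {C : ℝ} (hG : Measurable G) (hG0 : ∀ x, 0 ≤ G x) (hbd : ∀ x, G x ≤ C)
    (hHm : Measurable[PF.Geven (t-1)] (PF.Hres w (t-1) i))
    (hint : Integrable (fun ω => Kfun κ t G (PF.Xres (t-1) i ω) * PF.Hres w (t-1) i ω) PF.P) :
    Integrable (fun ω => G (PF.Xtil t i ω) * PF.Hres w (t-1) i ω) PF.P ∧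
    ∫ ω, G (PF.Xtil t i ω) * PF.Hres w (t-1) i ω ∂PF.P
      = ∫ ω, Kfun κ t G (PF.Xres (t-1) i ω) * PF.Hres w (t-1) i ω ∂PF.P := by
  have hGle : ∀ x, G x ≤ max C 0 := fun x => (hbd x).trans (le_max_left _ _)
  have habs : ∀ x, |G x| ≤ max C 0 := fun x => by
    rw [abs_of_nonneg (hG0 x)]; exact hGle x
  have hHpos : ∀ ω, 0 < PF.Hres w (t-1) i ω := hres_pos PF hwf hm (t-1) i
  have hHmeas : Measurable (PF.Hres w (t-1) i) := hres_meas PF hwf (t-1) i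
  have hKmeas : Measurable (fun ω => Kfun κ t G (PF.Xres (t-1) i ω)) :=
    (kfun_meas (hmk t) hG).comp (PF.hXres_meas (t-1) i)
  have hK0 : ∀ ω, 0 ≤ Kfun κ t G (PF.Xres (t-1) i ω) := fun ω => kfun_nonneg t hG0 _
  have hcond := condexp_prop PF hprop hmk ht1 htT hi hG habs
  have hle := geven_le PF (t-1)
  have hstep : ∀ n : ℕ, ∫ ω, G (PF.Xtil t i ω) * min (PF.Hres w (t-1) i ω) n ∂PF.P
      = ∫ ω, Kfun κ t G (PF.Xres (t-1) i ω) * min (PF.Hres w (t-1) i ω) n ∂PF.P := by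
    intro n
    set f : PF.Ω → ℝ := fun ω => min (PF.Hres w (t-1) i ω) n with hf
    set g : PF.Ω → ℝ := fun ω => G (PF.Xtil t i ω) with hg
    have hfm : StronglyMeasurable[PF.Geven (t-1)] f :=
      (hHm.min measurable_const).stronglyMeasurable
    have hgint : Integrable g PF.P :=
      bdd_integrable ((hG.comp (PF.hXtil_meas t i)).aestronglyMeasurable)
        (fun ω => habs (PF.Xtil t i ω))
    have hfgint : Integrable (f * g) PF.P := by
      refine bdd_integrable (C := n * max C 0)
        (((hHmeas.min measurable_const).mul (hG.comp (PF.hXtil_meas t i))).aestronglyMeasurable) ?_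
      intro ω
      have h1 : 0 ≤ f ω := le_min (hHpos ω).le (Nat.cast_nonneg n)
      have h2 : f ω ≤ n := min_le_right _ _
      rw [Pi.mul_apply, abs_of_nonneg (mul_nonneg h1 (hG0 _))]
      exact mul_le_mul h2 (hGle _) (hG0 _) (Nat.cast_nonneg n)
    have hpull := condExp_mul_of_stronglyMeasurable_left hfm hfgint hgint
    calc ∫ ω, G (PF.Xtil t i ω) * min (PF.Hres w (t-1) i ω) n ∂PF.P
        = ∫ ω, (f * g) ω ∂PF.P := by
          refine integral_congr_ae (ae_of_all _ fun ω => ?_)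
          rw [Pi.mul_apply]; ring
      _ = ∫ ω, (PF.P[f * g|PF.Geven (t-1)]) ω ∂PF.P := (integral_condExp hle).symm
      _ = ∫ ω, f ω * Kfun κ t G (PF.Xres (t-1) i ω) ∂PF.P := by
          refine integral_congr_ae (hpull.trans ?_)
          filter_upwards [hcond] with ω hω
          rw [Pi.mul_apply, hω]
      _ = ∫ ω, Kfun κ t G (PF.Xres (t-1) i ω) * min (PF.Hres w (t-1) i ω) n ∂PF.P := by
          refine integral_congr_ae (ae_of_all _ fun ω => ?_); ring
  have hDCT : Tendsto
      (fun n : ℕ => ∫ ω, Kfun κ t G (PF.Xres (t-1) i ω) * min (PF.Hres w (t-1) i ω) n ∂PF.P)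
      atTop (nhds (∫ ω, Kfun κ t G (PF.Xres (t-1) i ω) * PF.Hres w (t-1) i ω ∂PF.P)) := by
    refine tendsto_integral_of_dominated_convergence _ ?_ hint ?_ ?_
    · intro n
      exact (hKmeas.mul (hHmeas.min measurable_const)).aestronglyMeasurable
    · intro n
      refine ae_of_all _ fun ω => ?_
      have h1 : 0 ≤ min (PF.Hres w (t-1) i ω) n := le_min (hHpos ω).le (Nat.cast_nonneg n)
      rw [Real.norm_eq_abs, abs_of_nonneg (mul_nonneg (hK0 ω) h1)]
      exact mul_le_mul_of_nonneg_left (min_le_left _ _) (hK0 ω)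
    · exact ae_of_all _ fun ω => (min_nat_tendsto (PF.Hres w (t-1) i ω)).const_mul _
  refine lim_trick (fn := fun n ω => G (PF.Xtil t i ω) * min (PF.Hres w (t-1) i ω) n)
    ?_ ?_ ?_ ?_ ?_ (hDCT.congr fun n => (hstep n).symm)
  · intro n
    refine bdd_integrable (C := max C 0 * n)
      (((hG.comp (PF.hXtil_meas t i)).mul (hHmeas.min measurable_const)).aestronglyMeasurable) ?_
    intro ω
    have h1 : 0 ≤ min (PF.Hres w (t-1) i ω) n := le_min (hHpos ω).le (Nat.cast_nonneg n)
    rw [abs_of_nonneg (mul_nonneg (hG0 _) h1)]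
    exact mul_le_mul (hGle _) (min_le_right _ _) h1 (le_max_right C 0)
  · intro n ω
    exact mul_nonneg (hG0 _) (le_min (hHpos ω).le (Nat.cast_nonneg n))
  · intro ω a b hab
    exact mul_le_mul_of_nonneg_left (min_nat_mono _ hab) (hG0 _)
  · intro ω
    exact (min_nat_tendsto (PF.Hres w (t-1) i ω)).const_mul _
  · exact ((hG.comp (PF.hXtil_meas t i)).mul hHmeas).aestronglyMeasurable

lemma condexp_B (hres : PF.ResamplingLaw w) (hwf : WeightFns w T) (hm : 1 ≤ m)
    {s i b : ℕ} (hs1 : 1 ≤ s) (hsT : s ≤ T - 1) (hi : i < m) (hb : b < m) :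
    PF.P[fun ω => if PF.B s i ω = b then (1:ℝ) else 0|PF.Godd s]
      =ᵐ[PF.P] PF.Wn w s b := by
  classical
  have h := hres s hs1 hsT (fun j x => if j = i then (if x = b then 1 else 0) else 1)
  have hL : (fun ω => ∏ j ∈ Finset.range m,
      (fun x => if j = i then (if x = b then (1:ℝ) else 0) else 1) (PF.B s j ω))
      = fun ω => if PF.B s i ω = b then (1:ℝ) else 0 := by
    funext ω
    rw [Finset.prod_eq_single_of_mem i (Finset.mem_range.mpr hi)]
    · simp
    · intro j _ hj; simp [hj]
  have hR : (fun ω => ∏ j ∈ Finset.range m, ∑ a ∈ Finset.range m,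
      PF.Wn w s a ω * (if j = i then (if a = b then (1:ℝ) else 0) else 1))
      = PF.Wn w s b := by
    funext ω
    rw [Finset.prod_eq_single_of_mem i (Finset.mem_range.mpr hi)]
    · simp only [if_pos rfl, eq_self_iff_true, if_true, mul_ite, mul_one, mul_zero]
      rw [Finset.sum_ite_eq' (Finset.range m) b (fun a => PF.Wn w s a ω),
        if_pos (Finset.mem_range.mpr hb)]
    · intro j _ hj
      simp only [if_neg hj, mul_one]
      exact wn_sum_one PF hwf hm s ω
  rw [hL, hR] at h
  exact h

lemma resamp_step (hdyn : PF.Dynamics) (hres : PF.ResamplingLaw w) (hwf : WeightFns w T)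
    (hm : 1 ≤ m) {s : ℕ} (hs1 : 1 ≤ s) (hsT : s ≤ T - 1)
    {F : (ℕ → S) → ℝ} {C : ℝ} (hF : Measurable F) (hF0 : ∀ x, 0 ≤ F x) (hbd : ∀ x, F x ≤ C)
    (hsum : Integrable
      (fun ω => ∑ b ∈ Finset.range m, F (PF.Xtil s b ω) * PF.Hres w (s-1) b ω) PF.P)
    {i : ℕ} (hi : i < m) :
    Integrable (fun ω => F (PF.Xres s i ω) * PF.Hres w s i ω) PF.P ∧
    ∫ ω, F (PF.Xres s i ω) * PF.Hres w s i ω ∂PF.P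
      = (m:ℝ)⁻¹ * ∫ ω, ∑ b ∈ Finset.range m, F (PF.Xtil s b ω) * PF.Hres w (s-1) b ω ∂PF.P := by
  classical
  have hsT' : s ≤ T := by omega
  have hFle : ∀ x, F x ≤ max C 0 := fun x => (hbd x).trans (le_max_left _ _)
  set Z : ℕ → PF.Ω → ℝ := fun b ω => F (PF.Xtil s b ω) * PF.Htil w s b ω with hZdef
  have hZ0 : ∀ b ω, 0 ≤ Z b ω := fun b ω =>
    mul_nonneg (hF0 _) (htil_pos PF hwf hm s b ω).le
  have hZmeas : ∀ b, Measurable (Z b) := fun b =>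
    (hF.comp (PF.hXtil_meas s b)).mul (htil_meas PF hwf s b)
  have hterm0 : ∀ b (ω : PF.Ω), 0 ≤ F (PF.Xtil s b ω) * PF.Hres w (s-1) b ω := fun b ω =>
    mul_nonneg (hF0 _) (hres_pos PF hwf hm (s-1) b ω).le
  have htermmeas : ∀ b, Measurable (fun ω => F (PF.Xtil s b ω) * PF.Hres w (s-1) b ω) :=
    fun b => (hF.comp (PF.hXtil_meas s b)).mul (hres_meas PF hwf (s-1) b)
  have hWZ : ∀ b, (fun ω => PF.Wn w s b ω * Z b ω)
      = fun ω => (m:ℝ)⁻¹ * (F (PF.Xtil s b ω) * PF.Hres w (s-1) b ω) := by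
    intro b; funext ω
    have hk := key_alg PF hdyn hwf hm hs1 hsT' b ω
    calc PF.Wn w s b ω * Z b ω
        = F (PF.Xtil s b ω) * (PF.Wn w s b ω * PF.Htil w s b ω) := by rw [hZdef]; ring
      _ = F (PF.Xtil s b ω) * ((m:ℝ)⁻¹ * PF.Hres w (s-1) b ω) := by rw [hk]
      _ = (m:ℝ)⁻¹ * (F (PF.Xtil s b ω) * PF.Hres w (s-1) b ω) := by ring
  have hWZint : ∀ b ∈ Finset.range m, Integrable (fun ω => PF.Wn w s b ω * Z b ω) PF.P := by
    intro b hb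
    rw [hWZ b]
    exact (integrable_term_of_sum hterm0 (fun b => (htermmeas b).aestronglyMeasurable)
      hsum hb).const_mul _
  have hpt : ∀ ω, F (PF.Xres s i ω) * PF.Hres w s i ω
      = ∑ b ∈ Finset.range m, (if PF.B s i ω = b then (1:ℝ) else 0) * Z b ω := by
    intro ω
    rw [Finset.sum_eq_single_of_mem (PF.B s i ω) (Finset.mem_range.mpr (hdyn.2.2.1 s i ω))]
    · rw [if_pos rfl, one_mul]
      have hXr : PF.Xres s i ω = PF.Xtil s (PF.B s i ω) ω := (hdyn.2.2.2 s hs1 hsT i ω).1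
      have hH : PF.Hres w s i ω = PF.Htil w s (PF.B s i ω) ω := by
        unfold Particles.Hres Particles.Htil; rw [hXr]
      rw [hXr, hH]
    · intro b _ hbne
      rw [if_neg (fun h => hbne h.symm), zero_mul]
  have heach : ∀ b ∈ Finset.range m,
      Integrable (fun ω => (if PF.B s i ω = b then (1:ℝ) else 0) * Z b ω) PF.P ∧
      ∫ ω, (if PF.B s i ω = b then (1:ℝ) else 0) * Z b ω ∂PF.P
        = ∫ ω, PF.Wn w s b ω * Z b ω ∂PF.P := by
    intro b hb
    have hb' : b < m := Finset.mem_range.mp hb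
    have hZgodd : Measurable[PF.Godd s] (Z b) :=
      (hF.comp (xtil_godd PF hs1 le_rfl hb')).mul (htil_godd PF hwf hs1 hb')
    have hindm : Measurable (fun ω => if PF.B s i ω = b then (1:ℝ) else 0) := by
      refine Measurable.ite ?_ measurable_const measurable_const
      exact (PF.hB_meas s i) (measurableSet_singleton b)
    have hind0 : ∀ ω, 0 ≤ (if PF.B s i ω = b then (1:ℝ) else 0) := fun ω => by
      split <;> norm_num
    have hind1 : ∀ ω, (if PF.B s i ω = b then (1:ℝ) else 0) ≤ 1 := fun ω => by
      split <;> norm_num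
    have hWnm : Measurable (PF.Wn w s b) := wn_meas PF hwf s b
    have hW0 : ∀ ω, 0 ≤ PF.Wn w s b ω := wn_nonneg PF hwf hm s b
    have hstep : ∀ n : ℕ,
        ∫ ω, (if PF.B s i ω = b then (1:ℝ) else 0) * min (Z b ω) n ∂PF.P
          = ∫ ω, PF.Wn w s b ω * min (Z b ω) n ∂PF.P := by
      intro n
      set f : PF.Ω → ℝ := fun ω => min (Z b ω) n with hfdef
      set g : PF.Ω → ℝ := fun ω => if PF.B s i ω = b then (1:ℝ) else 0 with hgdef
      have hfm : StronglyMeasurable[PF.Godd s] f :=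
        (hZgodd.min measurable_const).stronglyMeasurable
      have hgint : Integrable g PF.P :=
        bdd_integrable hindm.aestronglyMeasurable (C := 1) (fun ω => by
          rw [hgdef]; dsimp only; split <;> norm_num)
      have hfgint : Integrable (f * g) PF.P := by
        refine bdd_integrable (C := (n:ℝ))
          (((hZmeas b).min measurable_const).mul hindm).aestronglyMeasurable ?_
        intro ω
        have h1 : 0 ≤ f ω := le_min (hZ0 b ω) (Nat.cast_nonneg n)
        rw [Pi.mul_apply, abs_of_nonneg (mul_nonneg h1 (hind0 ω))]
        calc f ω * g ω ≤ (n:ℝ) * 1 :=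
              mul_le_mul (min_le_right _ _) (hind1 ω) (hind0 ω) (Nat.cast_nonneg n)
          _ = n := mul_one _
      have hpull := condExp_mul_of_stronglyMeasurable_left hfm hfgint hgint
      have hcb := condexp_B PF hres hwf hm hs1 hsT hi hb'
      calc ∫ ω, (if PF.B s i ω = b then (1:ℝ) else 0) * min (Z b ω) n ∂PF.P
          = ∫ ω, (f * g) ω ∂PF.P := by
            refine integral_congr_ae (ae_of_all _ fun ω => ?_)
            rw [Pi.mul_apply]; ring
        _ = ∫ ω, (PF.P[f * g|PF.Godd s]) ω ∂PF.P := (integral_condExp (godd_le PF s)).symm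
        _ = ∫ ω, f ω * PF.Wn w s b ω ∂PF.P := by
            refine integral_congr_ae (hpull.trans ?_)
            filter_upwards [hcb] with ω hω
            rw [Pi.mul_apply, hω]
        _ = ∫ ω, PF.Wn w s b ω * min (Z b ω) n ∂PF.P := by
            refine integral_congr_ae (ae_of_all _ fun ω => ?_); ring
    have hDCT : Tendsto (fun n : ℕ => ∫ ω, PF.Wn w s b ω * min (Z b ω) n ∂PF.P)
        atTop (nhds (∫ ω, PF.Wn w s b ω * Z b ω ∂PF.P)) := by
      refine tendsto_integral_of_dominated_convergence _ ?_ (hWZint b hb) ?_ ?_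
      · intro n
        exact (hWnm.mul ((hZmeas b).min measurable_const)).aestronglyMeasurable
      · intro n
        refine ae_of_all _ fun ω => ?_
        have h1 : 0 ≤ min (Z b ω) n := le_min (hZ0 b ω) (Nat.cast_nonneg n)
        rw [Real.norm_eq_abs, abs_of_nonneg (mul_nonneg (hW0 ω) h1)]
        exact mul_le_mul_of_nonneg_left (min_le_left _ _) (hW0 ω)
      · exact ae_of_all _ fun ω => (min_nat_tendsto (Z b ω)).const_mul _
    refine lim_trick (fn := fun n ω => (if PF.B s i ω = b then (1:ℝ) else 0) * min (Z b ω) n)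
      ?_ ?_ ?_ ?_ ?_ (hDCT.congr fun n => (hstep n).symm)
    · intro n
      refine bdd_integrable (C := (n:ℝ))
        ((hindm.mul ((hZmeas b).min measurable_const)).aestronglyMeasurable) ?_
      intro ω
      have h1 : 0 ≤ min (Z b ω) n := le_min (hZ0 b ω) (Nat.cast_nonneg n)
      rw [abs_of_nonneg (mul_nonneg (hind0 ω) h1)]
      calc (if PF.B s i ω = b then (1:ℝ) else 0) * min (Z b ω) n ≤ 1 * n :=
            mul_le_mul (hind1 ω) (min_le_right _ _) h1 zero_le_one
        _ = n := one_mul _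
    · intro n ω
      exact mul_nonneg (hind0 ω) (le_min (hZ0 b ω) (Nat.cast_nonneg n))
    · intro ω a c hac
      exact mul_le_mul_of_nonneg_left (min_nat_mono _ hac) (hind0 ω)
    · intro ω
      exact (min_nat_tendsto (Z b ω)).const_mul _
    · exact (hindm.mul (hZmeas b)).aestronglyMeasurable
  constructor
  · have : (fun ω => F (PF.Xres s i ω) * PF.Hres w s i ω)
        = fun ω => ∑ b ∈ Finset.range m, (if PF.B s i ω = b then (1:ℝ) else 0) * Z b ω :=
      funext hpt
    rw [this]
    exact integrable_finset_sum _ fun b hb => (heach b hb).1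
  · calc ∫ ω, F (PF.Xres s i ω) * PF.Hres w s i ω ∂PF.P
        = ∫ ω, ∑ b ∈ Finset.range m, (if PF.B s i ω = b then (1:ℝ) else 0) * Z b ω ∂PF.P :=
          integral_congr_ae (ae_of_all _ hpt)
      _ = ∑ b ∈ Finset.range m, ∫ ω, (if PF.B s i ω = b then (1:ℝ) else 0) * Z b ω ∂PF.P :=
          integral_finset_sum _ fun b hb => (heach b hb).1
      _ = ∑ b ∈ Finset.range m, ∫ ω, PF.Wn w s b ω * Z b ω ∂PF.P :=
          Finset.sum_congr rfl fun b hb => (heach b hb).2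
      _ = ∑ b ∈ Finset.range m,
            ∫ ω, (m:ℝ)⁻¹ * (F (PF.Xtil s b ω) * PF.Hres w (s-1) b ω) ∂PF.P :=
          Finset.sum_congr rfl fun b _ => by rw [hWZ b]
      _ = (m:ℝ)⁻¹ * ∑ b ∈ Finset.range m,
            ∫ ω, F (PF.Xtil s b ω) * PF.Hres w (s-1) b ω ∂PF.P := by
          rw [Finset.mul_sum]
          exact Finset.sum_congr rfl fun b _ => integral_const_mul _ _
      _ = (m:ℝ)⁻¹ * ∫ ω, ∑ b ∈ Finset.range m, F (PF.Xtil s b ω) * PF.Hres w (s-1) b ω ∂PF.P := by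
          rw [integral_finset_sum _ fun b hb => integrable_term_of_sum hterm0
            (fun b => (htermmeas b).aestronglyMeasurable) hsum hb]

end CondExp

section Main

variable {S : Type} [MeasurableSpace S] {T m : ℕ} (PF : Particles S T m)
  {w : ℕ → (ℕ → S) → ℝ} {κ : ℕ → Kernel (ℕ → S) (ℕ → S)} {Q : Measure (ℕ → S)}

lemma main_ind (hQ : IsProbabilityMeasure Q) (hκ : IsProposal Q κ T)
    (hwf : WeightFns w T) (hm : 1 ≤ m)
    (hdyn : PF.Dynamics) (hprop : PF.PropagationLaw κ) (hres : PF.ResamplingLaw w) :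
    ∀ t, 1 ≤ t → t ≤ T → ∀ (G : (ℕ → S) → ℝ) (C : ℝ), Measurable G → (∀ x, 0 ≤ G x) →
      (∀ x, G x ≤ C) →
      Integrable (fun ω => ∑ i ∈ Finset.range m,
        G (PF.Xtil t i ω) * PF.Hres w (t-1) i ω) PF.P ∧
      ∫ ω, ∑ i ∈ Finset.range m, G (PF.Xtil t i ω) * PF.Hres w (t-1) i ω ∂PF.P
        = m * ∫ x, G x ∂Q := by
  haveI := PF.hP
  haveI := hQ
  have hmk := hκ.markov
  have hm0 : (m:ℝ) ≠ 0 := Nat.cast_ne_zero.mpr (by omega)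
  intro t
  induction t with
  | zero => intro h; omega
  | succ n ih =>
    intro _ htT G C hG hG0 hbd
    simp only [Nat.add_sub_cancel]
    have habs : ∀ x, |G x| ≤ max C 0 := fun x => by
      rw [abs_of_nonneg (hG0 x)]; exact (hbd x).trans (le_max_left _ _)
    by_cases hn : n = 0
    · -- base case t = 1
      subst hn
      simp only [zero_add]
      have hH1 : ∀ (i : ℕ) (ω : PF.Ω), PF.Hres w 0 i ω = 1 := fun i ω => by
        unfold Particles.Hres; simp
      have hfun : (fun ω => ∑ i ∈ Finset.range m, G (PF.Xtil 1 i ω) * PF.Hres w 0 i ω)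
          = fun ω => ∑ i ∈ Finset.range m, G (PF.Xtil 1 i ω) := by
        funext ω; exact Finset.sum_congr rfl fun i _ => by rw [hH1, mul_one]
      have hinteach : ∀ i : ℕ, Integrable (fun ω => G (PF.Xtil 1 i ω)) PF.P := fun i =>
        bdd_integrable (hG.comp (PF.hXtil_meas 1 i)).aestronglyMeasurable
          (fun ω => habs (PF.Xtil 1 i ω))
      have hne : Nonempty (ℕ → S) := by
        by_contra hcon
        rw [not_nonempty_iff] at hcon
        have h1 := hQ.measure_univ
        rw [Set.univ_eq_empty_iff.mpr hcon, measure_empty] at h1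
        exact zero_ne_one h1
      obtain ⟨z⟩ := hne
      have hconst : ∀ x y, Kfun κ 1 G x = Kfun κ 1 G y := fun x y => by
        unfold Kfun; rw [hκ.init_const x y]
      have heq : ∀ i, i < m → ∫ ω, G (PF.Xtil 1 i ω) ∂PF.P = ∫ x, G x ∂Q := by
        intro i hi
        have hcond := condexp_prop PF hprop hmk (le_refl 1) htT hi hG habs
        have h1 : ∫ ω, G (PF.Xtil 1 i ω) ∂PF.P
            = ∫ ω, Kfun κ 1 G (PF.Xres 0 i ω) ∂PF.P := by
          calc ∫ ω, G (PF.Xtil 1 i ω) ∂PF.P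
              = ∫ ω, (PF.P[fun ω => G (PF.Xtil 1 i ω)|PF.Geven 0]) ω ∂PF.P :=
                (integral_condExp (geven_le PF 0)).symm
            _ = ∫ ω, Kfun κ 1 G (PF.Xres 0 i ω) ∂PF.P := integral_congr_ae hcond
        have h2 : ∫ ω, Kfun κ 1 G (PF.Xres 0 i ω) ∂PF.P = Kfun κ 1 G z := by
          rw [show (fun ω => Kfun κ 1 G (PF.Xres 0 i ω)) = fun _ => Kfun κ 1 G z from
            funext fun ω => hconst _ _]
          simp [measure_univ]
        have h3 : ∫ x, Kfun κ 1 G x ∂Q = Kfun κ 1 G z := by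
          rw [show (fun x => Kfun κ 1 G x) = fun _ => Kfun κ 1 G z from
            funext fun x => hconst _ _]
          simp [measure_univ]
        rw [h1, h2, ← h3, kfun_integral hQ hκ (le_refl 1) htT hG habs]
      constructor
      · rw [hfun]; exact integrable_finset_sum _ fun i _ => hinteach i
      · rw [hfun, integral_finset_sum _ fun i _ => hinteach i,
          Finset.sum_congr rfl fun i hi => heq i (Finset.mem_range.mp hi),
          Finset.sum_const, Finset.card_range, nsmul_eq_mul]
    · -- inductive step: t = n + 1 with 1 ≤ n
      have hn1 : 1 ≤ n := by omega
      have hnT1 : n ≤ T - 1 := by omega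
      have hnT : n ≤ T := by omega
      have ht1 : 1 ≤ n + 1 := by omega
      set G' := Kfun κ (n+1) G with hG'def
      have hG'm : Measurable G' := kfun_meas (hmk (n+1)) hG
      have hG'0 : ∀ x, 0 ≤ G' x := kfun_nonneg (n+1) hG0
      have hG'le : ∀ x, G' x ≤ max C 0 :=
        kfun_le (hmk (n+1)) hG hG0 (fun x => (hbd x).trans (le_max_left _ _))
      obtain ⟨hIH1, hIH2⟩ := ih hn1 hnT G' (max C 0) hG'm hG'0 hG'le
      have hQ' : ∫ x, G' x ∂Q = ∫ x, G x ∂Q :=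
        kfun_integral hQ hκ ht1 htT hG habs
      have hresamp : ∀ i, i < m →
          Integrable (fun ω => G' (PF.Xres n i ω) * PF.Hres w n i ω) PF.P ∧
          ∫ ω, G' (PF.Xres n i ω) * PF.Hres w n i ω ∂PF.P = ∫ x, G x ∂Q := by
        intro i hi
        obtain ⟨hri, hrv⟩ := resamp_step PF hdyn hres hwf hm hn1 hnT1
          hG'm hG'0 hG'le hIH1 hi
        refine ⟨hri, ?_⟩
        rw [hrv, hIH2, inv_mul_cancel_left₀ hm0, hQ']
      have hpropg : ∀ i, i < m →
          Integrable (fun ω => G (PF.Xtil (n+1) i ω) * PF.Hres w n i ω) PF.P ∧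
          ∫ ω, G (PF.Xtil (n+1) i ω) * PF.Hres w n i ω ∂PF.P = ∫ x, G x ∂Q := by
        intro i hi
        have hHm : Measurable[PF.Geven n] (PF.Hres w n i) := hres_geven PF hwf hn hi
        have hri := (hresamp i hi).1
        have hrv := (hresamp i hi).2
        have hri' : Integrable
            (fun ω => Kfun κ (n+1) G (PF.Xres ((n+1)-1) i ω) * PF.Hres w ((n+1)-1) i ω) PF.P := by
          simpa only [Nat.add_sub_cancel] using hri
        have hHm' : Measurable[PF.Geven ((n+1)-1)] (PF.Hres w ((n+1)-1) i) := by
          simpa only [Nat.add_sub_cancel] using hHm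
        obtain ⟨hp1, hp2⟩ := prop_step PF hwf hm hprop hmk ht1 htT hi hG hG0 hbd hHm' hri'
        simp only [Nat.add_sub_cancel] at hp1 hp2
        exact ⟨hp1, by rw [hp2]; exact hrv⟩
      constructor
      · exact integrable_finset_sum _ fun i hi => (hpropg i (Finset.mem_range.mp hi)).1
      · rw [integral_finset_sum _ fun i hi => (hpropg i (Finset.mem_range.mp hi)).1,
          Finset.sum_congr rfl fun i hi => (hpropg i (Finset.mem_range.mp hi)).2,
          Finset.sum_const, Finset.card_range, nsmul_eq_mul]

lemma final_claim (hQ : IsProbabilityMeasure Q) (hκ : IsProposal Q κ T)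
    (hwf : WeightFns w T) (hm : 1 ≤ m)
    (hdyn : PF.Dynamics) (hprop : PF.PropagationLaw κ) (hres : PF.ResamplingLaw w)
    (hT : 1 ≤ T) {F : (ℕ → S) → ℝ}
    (hF : Measurable F) (hF0 : ∀ x, 0 ≤ F x) (hFint : Integrable F Q) :
    Integrable (fun ω => ∑ i ∈ Finset.range m,
      F (PF.Xtil T i ω) * PF.Hres w (T-1) i ω) PF.P ∧
    ∫ ω, ∑ i ∈ Finset.range m, F (PF.Xtil T i ω) * PF.Hres w (T-1) i ω ∂PF.P
      = m * ∫ x, F x ∂Q := by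
  haveI := PF.hP
  haveI := hQ
  have hmain := main_ind PF hQ hκ hwf hm hdyn hprop hres T hT le_rfl
  have hHpos := fun (i : ℕ) (ω : PF.Ω) => hres_pos PF hwf hm (T-1) i ω
  have happ := fun n : ℕ => hmain (fun x => min (F x) n) n (hF.min measurable_const)
    (fun x => le_min (hF0 x) (Nat.cast_nonneg n)) (fun x => min_le_right _ _)
  have hDCTQ : Tendsto (fun n : ℕ => ∫ x, min (F x) n ∂Q) atTop (nhds (∫ x, F x ∂Q)) := by
    refine tendsto_integral_of_dominated_convergence F
      (fun n => (hF.min measurable_const).aestronglyMeasurable) hFint ?_ ?_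
    · intro n
      refine ae_of_all _ fun x => ?_
      rw [Real.norm_eq_abs, abs_of_nonneg (le_min (hF0 x) (Nat.cast_nonneg n))]
      exact min_le_left _ _
    · exact ae_of_all _ fun x => min_nat_tendsto (F x)
  refine lim_trick
    (fn := fun n ω => ∑ i ∈ Finset.range m, min (F (PF.Xtil T i ω)) n * PF.Hres w (T-1) i ω)
    (fun n => (happ n).1) ?_ ?_ ?_ ?_ ?_
  · intro n ω
    exact Finset.sum_nonneg fun i _ =>
      mul_nonneg (le_min (hF0 _) (Nat.cast_nonneg n)) (hHpos i ω).le
  · intro ω a b hab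
    exact Finset.sum_le_sum fun i _ =>
      mul_le_mul_of_nonneg_right (min_nat_mono _ hab) (hHpos i ω).le
  · intro ω
    exact tendsto_finset_sum _ fun i _ =>
      (min_nat_tendsto (F (PF.Xtil T i ω))).mul_const _
  · exact (Finset.measurable_sum _ fun i _ =>
      (hF.comp (PF.hXtil_meas T i)).mul (hres_meas PF hwf (T-1) i)).aestronglyMeasurable
  · exact (hDCTQ.const_mul (m:ℝ)).congr fun n => ((happ n).2).symm

end Main


/-- unbiasedness of the prototype estimate.  In the basic
prototype with the bootstrap particle filter, `ψ̃_T` is an unbiased estimate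
of `ψ_T = E[ψ(X_T)|Y_T] = E_q[ψ(X_T) L_T(X_T)]`, for every number `m ≥ 1` of
particles.  Here `L_T = p̃_T/∏_t q_t` is the likelihood ratio, which is
nonnegative with `E_q L_T = 1` since `p̃_T(·) = p̃_T(·|Y_T)` is the
conditional density of `X_T` given `Y_T`, and `ψ(X_T) L_T(X_T)` is assumed
`E_q`-integrable. -/
theorem statement_5 {S : Type} [MeasurableSpace S] (T : ℕ) (hT : 1 ≤ T)
    (Q : Measure (ℕ → S)) (hQ : IsProbabilityMeasure Q)
    (κ : ℕ → Kernel (ℕ → S) (ℕ → S)) (hκ : IsProposal Q κ T)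
    (w : ℕ → (ℕ → S) → ℝ) (hw : WeightFns w T)
    (ψ L : (ℕ → S) → ℝ)
    (hψ : Measurable ψ) (hψdep : DependsOn T ψ)
    (hL : Measurable L) (hLdep : DependsOn T L) (hLpos : ∀ x, 0 ≤ L x)
    (hLdens : ∫ x, L x ∂Q = 1)
    (hint : Integrable (fun x => ψ x * L x) Q)
    (m : ℕ) (hm : 1 ≤ m) (PF : Particles S T m)
    (hPF : PF.IsBootstrapFilter w κ) :
    Integrable (PF.psiTilde w L ψ) PF.P ∧
    ∫ ω, PF.psiTilde w L ψ ω ∂PF.P = ∫ x, ψ x * L x ∂Q := by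
  obtain ⟨hdyn, hprop, hres⟩ := hPF
  haveI := PF.hP
  haveI := hQ
  have hm0 : (m:ℝ) ≠ 0 := Nat.cast_ne_zero.mpr (by omega)
  have hG0meas : Measurable (fun x => L x * ψ x) := hL.mul hψ
  have hG0int : Integrable (fun x => L x * ψ x) Q :=
    hint.congr (ae_of_all _ fun x => mul_comm _ _)
  set Gp : (ℕ → S) → ℝ := fun x => max (L x * ψ x) 0 with hGpdef
  set Gm : (ℕ → S) → ℝ := fun x => max (-(L x * ψ x)) 0 with hGmdef
  have hGpm : Measurable Gp := hG0meas.max measurable_const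
  have hGmm : Measurable Gm := hG0meas.neg.max measurable_const
  have hGpint : Integrable Gp Q := hG0int.pos_part
  have hGmint : Integrable Gm Q := hG0int.neg.pos_part
  obtain ⟨hIp, hVp⟩ := final_claim PF hQ hκ hw hm hdyn hprop hres hT hGpm
    (fun x => le_max_right _ _) hGpint
  obtain ⟨hIm, hVm⟩ := final_claim PF hQ hκ hw hm hdyn hprop hres hT hGmm
    (fun x => le_max_right _ _) hGmint
  have hdiff : ∀ ω, ∑ i ∈ Finset.range m,
      L (PF.Xtil T i ω) * ψ (PF.Xtil T i ω) * PF.Hres w (T-1) i ω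
      = (∑ i ∈ Finset.range m, Gp (PF.Xtil T i ω) * PF.Hres w (T-1) i ω)
        - ∑ i ∈ Finset.range m, Gm (PF.Xtil T i ω) * PF.Hres w (T-1) i ω := by
    intro ω
    rw [← Finset.sum_sub_distrib]
    refine Finset.sum_congr rfl fun i _ => ?_
    rw [← sub_mul]
    congr 1
    exact (max_zero_sub_max_neg_zero_eq_self _).symm
  have hbig : Integrable (fun ω => ∑ i ∈ Finset.range m,
      L (PF.Xtil T i ω) * ψ (PF.Xtil T i ω) * PF.Hres w (T-1) i ω) PF.P := by
    rw [show (fun ω => ∑ i ∈ Finset.range m,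
        L (PF.Xtil T i ω) * ψ (PF.Xtil T i ω) * PF.Hres w (T-1) i ω)
      = fun ω => (∑ i ∈ Finset.range m, Gp (PF.Xtil T i ω) * PF.Hres w (T-1) i ω)
        - ∑ i ∈ Finset.range m, Gm (PF.Xtil T i ω) * PF.Hres w (T-1) i ω from funext hdiff]
    exact hIp.sub hIm
  have hform : PF.psiTilde w L ψ = fun ω => (m:ℝ)⁻¹ * ∑ i ∈ Finset.range m,
      L (PF.Xtil T i ω) * ψ (PF.Xtil T i ω) * PF.Hres w (T-1) i ω := rfl
  have hQsub : (∫ x, Gp x ∂Q) - ∫ x, Gm x ∂Q = ∫ x, ψ x * L x ∂Q := by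
    rw [← integral_sub hGpint hGmint]
    refine integral_congr_ae (ae_of_all _ fun x => ?_)
    rw [hGpdef, hGmdef]
    dsimp only
    rw [max_zero_sub_max_neg_zero_eq_self, mul_comm]
  constructor
  · rw [hform]; exact hbig.const_mul _
  · rw [hform, integral_const_mul, integral_congr_ae (ae_of_all _ hdiff),
      integral_sub hIp hIm, hVp, hVm, ← mul_sub, inv_mul_cancel_left₀ hm0, hQsub]


end PFPaper
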